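/- The VI-SLAM measurement function h is equivariant with respect to the actions φ and ρ: for all X ∈ G and ξ ∈ 𝒯, h(φ(X, ξ)) = ρ(X, h(ξ)). -/

import Mathlib

noncomputable section
open Matrix

abbrev Mat3 := Matrix (Fin 3) (Fin 3) ℝ
abbrev Vec3 := EuclideanSpace ℝ (Fin 3)
abbrev Vec6 := EuclideanSpace ℝ (Fin 6)

/-- Membership in `SO(3)`. -/
def SO3 (R : Mat3) : Prop := Rᵀ * R = 1 ∧ R.det = 1

/-- The standard gravity direction `e₃ = (0,0,1)`. -/
def e3 : Vec3 := WithLp.toLp 2 ![0, 0, 1]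

/-- Matrix-vector multiplication on `ℝ³`. -/
def mulv (M : Mat3) (v : Vec3) : Vec3 := WithLp.toLp 2 (M.mulVec v)

/-- `SE(3)` elements as (rotation, translation) pairs `(R_P, x_P)`. -/
abbrev SE3 := Mat3 × Vec3
def SE3.mul (P Q : SE3) : SE3 := (P.1 * Q.1, P.2 + mulv P.1 Q.2)
def SE3.one : SE3 := (1, 0)
def SE3.inv (P : SE3) : SE3 := (P.1ᵀ, -(mulv P.1ᵀ P.2))
/-- The action of `SE(3)` on `ℝ³`: `P p = R_P p + x_P`. -/
def SE3.act (P : SE3) (p : Vec3) : Vec3 := mulv P.1 p + P.2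

/-- Membership in `SE_{e₃}(3) := {(R,x) ∈ SE(3) | R e₃ = e₃}`. -/
def SEe3 (S : SE3) : Prop := SO3 S.1 ∧ mulv S.1 e3 = e3

/-- `SOT(3)` elements as pairs `(R_Q, c_Q)`. -/
abbrev SOT3 := Mat3 × ℝ
def SOT3.mem (Q : SOT3) : Prop := SO3 Q.1 ∧ 0 < Q.2
def SOT3.mul (Q₁ Q₂ : SOT3) : SOT3 := (Q₁.1 * Q₂.1, Q₁.2 * Q₂.2)
def SOT3.one : SOT3 := (1, 1)
def SOT3.inv (Q : SOT3) : SOT3 := (Q.1ᵀ, Q.2⁻¹)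
/-- The action of `SOT(3)` on `ℝ³`: `Q p = c_Q R_Q p`. -/
def SOT3.act (Q : SOT3) (p : Vec3) : Vec3 := Q.2 • mulv Q.1 p

/-- `SE₂(3)` elements as triples `(R_A, x_A, v_A)`. -/
abbrev SE23 := Mat3 × Vec3 × Vec3
def SE23.mem (A : SE23) : Prop := SO3 A.1
def SE23.mul (A₁ A₂ : SE23) : SE23 :=
  (A₁.1 * A₂.1, A₁.2.1 + mulv A₁.1 A₂.2.1, A₁.2.2 + mulv A₁.1 A₂.2.2)
def SE23.one : SE23 := (1, 0, 0)
/-- The pose component `P_A = (R_A, x_A)` of `A = (P_A, v_A) ∈ SE₂(3)`. -/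
def SE23.P (A : SE23) : SE3 := (A.1, A.2.1)

/-- A point of the ambient VI-SLAM state space with `n` landmarks. -/
structure VIState (n : ℕ) where
  P : SE3            -- pose of the IMU `(R_B, x_B)`
  v : Vec3           -- linear velocity `v_B`
  b : Vec6           -- IMU bias `b_B`
  T : SE3            -- camera extrinsics
  p : Fin n → Vec3   -- landmark positions

/-- Membership in the VI-SLAM total space `𝒯`. -/
def VIState.mem {n : ℕ} (ξ : VIState n) : Prop :=
  SO3 ξ.P.1 ∧ SO3 ξ.T.1 ∧ ∀ i, SE3.act (SE3.inv (SE3.mul ξ.P ξ.T)) (ξ.p i) ≠ 0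

/-- An element `X = (A, β, B, (Q_i))` of the group `G = SE₂(3) × ℝ⁶ × SE(3) × SOT(3)ⁿ`. -/
structure GElem (n : ℕ) where
  A : SE23
  β : Vec6
  B : SE3
  Q : Fin n → SOT3

def GElem.mem {n : ℕ} (X : GElem n) : Prop :=
  SE23.mem X.A ∧ SO3 X.B.1 ∧ ∀ i, SOT3.mem (X.Q i)

/-- Componentwise product on `G`. -/
def GElem.mul {n : ℕ} (X₁ X₂ : GElem n) : GElem n :=
  ⟨SE23.mul X₁.A X₂.A, X₁.β + X₂.β, SE3.mul X₁.B X₂.B, fun i => SOT3.mul (X₁.Q i) (X₂.Q i)⟩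

def GElem.one (n : ℕ) : GElem n := ⟨SE23.one, 0, SE3.one, fun _ => SOT3.one⟩

/-- The group action
`φ(X, ξ) := (φ^B(A, ξ_B), b_B + β, P_A⁻¹ T B, (P_B T B (Q_i⁻¹ ((P_B T)⁻¹ p_i))))`. -/
def phi {n : ℕ} (X : GElem n) (ξ : VIState n) : VIState n :=
  ⟨SE3.mul ξ.P (SE23.P X.A), ξ.v + mulv ξ.P.1 X.A.2.2, ξ.b + X.β,
   SE3.mul (SE3.mul (SE3.inv (SE23.P X.A)) ξ.T) X.B,
   fun i => SE3.act (SE3.mul (SE3.mul ξ.P ξ.T) X.B)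
     (SOT3.act (SOT3.inv (X.Q i)) (SE3.act (SE3.inv (SE3.mul ξ.P ξ.T)) (ξ.p i)))⟩

/-- The `k`-th component of the measurement function: `h^k(ξ) = q_k/|q_k|`
with `q_k = (P_B T)⁻¹ p_k`. -/
def hComp {n : ℕ} (ξ : VIState n) (k : Fin n) : Vec3 :=
  ‖SE3.act (SE3.inv (SE3.mul ξ.P ξ.T)) (ξ.p k)‖⁻¹ •
    SE3.act (SE3.inv (SE3.mul ξ.P ξ.T)) (ξ.p k)

/-- The full measurement function `h(ξ) = (h¹(ξ), …, hⁿ(ξ))`. -/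
def hMeas {n : ℕ} (ξ : VIState n) : Fin n → Vec3 := fun k => hComp ξ k

/-- The output action `ρ(X, (y_i)) := (R_{Q_i}ᵀ y_i)` of `G` on `(S²)ⁿ`. -/
def rho {n : ℕ} (X : GElem n) (y : Fin n → Vec3) : Fin n → Vec3 :=
  fun i => mulv (X.Q i).1ᵀ (y i)



lemma inner_dot (x y : Vec3) : (inner ℝ x y : ℝ) = (x : Fin 3 → ℝ) ⬝ᵥ y := by
  simp [EuclideanSpace.inner_eq_star_dotProduct, dotProduct, mul_comm]

lemma norm_sq_dot (x : Vec3) : ‖x‖ ^ 2 = (x : Fin 3 → ℝ) ⬝ᵥ x :=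
  (real_inner_self_eq_norm_sq x).symm.trans (inner_dot x x)

lemma mulv_add (M : Mat3) (x y : Vec3) : mulv M (x + y) = mulv M x + mulv M y :=
  by simp [mulv, Matrix.mulVec_add]

lemma mulv_zero (M : Mat3) : mulv M (0 : Vec3) = 0 := by simp [mulv]

lemma mulv_neg (M : Mat3) (x : Vec3) : mulv M (-x) = -(mulv M x) := by
  have h : mulv M x + mulv M (-x) = 0 := by
    rw [← mulv_add, add_neg_cancel, mulv_zero]
  exact (neg_eq_of_add_eq_zero_right h).symm

lemma mulv_smul (M : Mat3) (c : ℝ) (x : Vec3) : mulv M (c • x) = c • mulv M x :=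
  by simp [mulv, Matrix.mulVec_smul]

lemma mulv_mulv (M N : Mat3) (x : Vec3) : mulv M (mulv N x) = mulv (M * N) x :=
  by simp [mulv, Matrix.mulVec_mulVec]

lemma mulv_one (x : Vec3) : mulv 1 x = x := by simp [mulv]

lemma norm_mulv_orth (M : Mat3) (hM : Mᵀ * M = 1) (v : Vec3) :
    ‖mulv M v‖ = ‖v‖ := by
  have key : M.mulVec v ⬝ᵥ M.mulVec v = v ⬝ᵥ v := by
    rw [Matrix.dotProduct_mulVec, ← Matrix.mulVec_transpose, Matrix.mulVec_mulVec, hM,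
      Matrix.one_mulVec]
  have h2 : ‖mulv M v‖ ^ 2 = ‖v‖ ^ 2 :=
    by rw [norm_sq_dot, norm_sq_dot]; exact key
  nlinarith [norm_nonneg (mulv M v), norm_nonneg v, h2]

lemma orth_mul (M N : Mat3) (hM : Mᵀ * M = 1) (hN : Nᵀ * N = 1) :
    (M * N)ᵀ * (M * N) = 1 := by
  rw [Matrix.transpose_mul, mul_assoc, ← mul_assoc Mᵀ, hM, one_mul, hN]

lemma act_inv_act (S : SE3) (hS : S.1ᵀ * S.1 = 1) (v : Vec3) :
    SE3.act (SE3.inv S) (SE3.act S v) = v := by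
  show mulv S.1ᵀ (mulv S.1 v + S.2) + -(mulv S.1ᵀ S.2) = v
  rw [mulv_add, mulv_mulv, hS, mulv_one]
  abel

lemma pose_combine (P T B PA : SE3) (hA : PA.1ᵀ * PA.1 = 1) :
    SE3.mul (SE3.mul P PA) (SE3.mul (SE3.mul (SE3.inv PA) T) B)
      = SE3.mul (SE3.mul P T) B := by
  have hA' : PA.1 * PA.1ᵀ = 1 := mul_eq_one_comm.mp hA
  refine Prod.ext ?_ ?_
  · show P.1 * PA.1 * (PA.1ᵀ * T.1 * B.1) = P.1 * T.1 * B.1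
    simp only [← mul_assoc]
    rw [mul_assoc P.1 PA.1 PA.1ᵀ, hA', mul_one]
  · show (P.2 + mulv P.1 PA.2) +
        mulv (P.1 * PA.1)
          ((-(mulv PA.1ᵀ PA.2) + mulv PA.1ᵀ T.2) + mulv (PA.1ᵀ * T.1) B.2)
      = (P.2 + mulv P.1 T.2) + mulv (P.1 * T.1) B.2
    rw [mulv_add, mulv_add, mulv_neg, mulv_mulv, mulv_mulv, mulv_mulv]
    rw [show P.1 * PA.1 * PA.1ᵀ = P.1 by rw [mul_assoc, hA', mul_one]]
    rw [show P.1 * PA.1 * (PA.1ᵀ * T.1) = P.1 * T.1 by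
      rw [← mul_assoc, mul_assoc P.1 PA.1 PA.1ᵀ, hA', mul_one]]
    abel

/-- The VI-SLAM measurement function `h` is equivariant with respect to
the actions `φ` and `ρ`: `h(φ(X, ξ)) = ρ(X, h(ξ))` for all `X ∈ G` and `ξ ∈ 𝒯`. -/
theorem h_equivariant (n : ℕ) (hn : 1 ≤ n) (X : GElem n) (ξ : VIState n)
    (hX : X.mem) (hξ : ξ.mem) :
    hMeas (phi X ξ) = rho X (hMeas ξ) := by
  funext k
  obtain ⟨⟨hRA, -⟩, hRB, hQmem⟩ := hX
  obtain ⟨hRP, hRT, hp⟩ := hξ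
  set Q := X.Q k with hQdef
  obtain ⟨⟨hQR, hQdet⟩, hQc⟩ := hQmem k
  set q : Vec3 := SE3.act (SE3.inv (SE3.mul ξ.P ξ.T)) (ξ.p k) with hq
  set S : SE3 := SE3.mul (SE3.mul ξ.P ξ.T) X.B with hS
  have hSorth : S.1ᵀ * S.1 = 1 := orth_mul _ _ (orth_mul _ _ hRP.1 hRT.1) hRB.1
  have hpose : SE3.mul (phi X ξ).P (phi X ξ).T = S :=
    pose_combine ξ.P ξ.T X.B (SE23.P X.A) hRA
  have hq' : SE3.act (SE3.inv (SE3.mul (phi X ξ).P (phi X ξ).T)) ((phi X ξ).p k)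
      = SOT3.act (SOT3.inv Q) q := by
    rw [hpose]
    show SE3.act (SE3.inv S) (SE3.act S (SOT3.act (SOT3.inv Q) q)) = _
    exact act_inv_act S hSorth _
  have hQorth : (Q.1ᵀ)ᵀ * Q.1ᵀ = 1 := by
    rw [Matrix.transpose_transpose]; exact mul_eq_one_comm.mp hQR
  have hQne : Q.2 ≠ 0 := ne_of_gt hQc
  have hnorm : ‖SOT3.act (SOT3.inv Q) q‖ = Q.2⁻¹ * ‖q‖ := by
    show ‖Q.2⁻¹ • mulv Q.1ᵀ q‖ = Q.2⁻¹ * ‖q‖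
    rw [norm_smul, norm_mulv_orth _ hQorth, Real.norm_eq_abs,
      abs_of_pos (inv_pos.mpr hQc)]
  show ‖SE3.act (SE3.inv (SE3.mul (phi X ξ).P (phi X ξ).T)) ((phi X ξ).p k)‖⁻¹ •
      SE3.act (SE3.inv (SE3.mul (phi X ξ).P (phi X ξ).T)) ((phi X ξ).p k)
    = mulv Q.1ᵀ (‖q‖⁻¹ • q)
  rw [hq', hnorm]
  show (Q.2⁻¹ * ‖q‖)⁻¹ • Q.2⁻¹ • mulv Q.1ᵀ q = mulv Q.1ᵀ (‖q‖⁻¹ • q)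
  rw [mulv_smul, smul_smul]
  congr 1
  rw [mul_inv, inv_inv, mul_comm Q.2 ‖q‖⁻¹, mul_assoc, mul_inv_cancel₀ hQne, mul_one]
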